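/- Let G be a finite directed acyclic graph whose nodes are labeled by operations over keys K (with decidable equality) and values V, each operation being 'write k v' or 'read k'. Suppose G is valid: for every node v labeled 'read k' that G designates as reading from a node u labeled with a write to k, there is an edge (or path) from u to v, and every other node w labeled with a write to k satisfies: there is a path from w to u, or a path from v to w; and suppose additionally that the set of nodes writing any fixed key k is totally ordered by reachability in G. Then for any two topological orders of G (linear orders on the nodes in which u precedes v whenever G has an edge from u to v) and any initial store s₀ : K → V, executing the node operations in the two orders yields the same returned value at every read node and the same final store. -/

import Mathlib

/-- An operation over keys `K` and values `V`: `write k v` or `read k`. -/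
inductive Op (K : Type*) (V : Type*) where
  | write (k : K) (v : V)
  | read (k : K)

variable {K V : Type*} [DecidableEq K]

/-- One execution step: a write updates the store, a read leaves it unchanged. -/
def step (s : K → V) : Op K V → K → V
  | Op.write k v => Function.update s k v
  | Op.read _ => s

/-- The store obtained by executing a schedule left to right from `s₀`. -/
def execStore (s₀ : K → V) (S : List (Op K V)) : K → V := S.foldl step s₀

/-- Accumulator keeping the value of the last write to key `k`. -/
def lastW (k : K) : Option V → Op K V → Option V
  | o, Op.write k' v => if k' = k then some v else o
  | o, Op.read _ => o

lemma foldl_lastW_or (k : K) (S : List (Op K V)) (o : Option V) :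
    S.foldl (lastW k) o = (S.foldl (lastW k) none).or o := by
  induction S generalizing o with
  | nil => simp
  | cons op S ih =>
    simp only [List.foldl_cons]
    rw [ih, ih (lastW k none op)]
    cases op with
    | write k' v =>
      by_cases h : k' = k
      · cases hf : S.foldl (lastW k) none <;> simp [lastW, h, hf]
      · cases hf : S.foldl (lastW k) none <;> simp [lastW, h, hf]
    | read k' => cases hf : S.foldl (lastW k) none <;> simp [lastW, hf]

lemma execStore_eq (k : K) (S : List (Op K V)) (s : K → V) :
    execStore s S k = (S.foldl (lastW k) none).getD (s k) := by
  induction S generalizing s with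
  | nil => simp [execStore]
  | cons op S ih =>
    have h1 : execStore s (op :: S) k = execStore (step s op) S k := rfl
    rw [h1, ih]
    have h2 : (op :: S).foldl (lastW k) none = S.foldl (lastW k) (lastW k none op) := rfl
    rw [h2, foldl_lastW_or k S (lastW k none op)]
    cases op with
    | write k' v =>
      by_cases h : k' = k
      · subst h
        cases hf : S.foldl (lastW k') none <;>
          simp [lastW, step, hf, Function.update]
      · cases hf : S.foldl (lastW k) none <;>
          simp [lastW, step, hf, Function.update, h, Ne.symm h]
    | read k' => cases hf : S.foldl (lastW k) none <;> simp [lastW, step, hf]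

lemma foldl_lastW_no_write (k : K) (S : List (Op K V)) (o : Option V)
    (h : ∀ op ∈ S, ∀ v', op ≠ Op.write k v') :
    S.foldl (lastW k) o = o := by
  induction S generalizing o with
  | nil => rfl
  | cons op S ih =>
    have hop : lastW k o op = o := by
      cases op with
      | write k' v =>
        have := h _ List.mem_cons_self v
        have hk : k' ≠ k := by rintro rfl; exact this rfl
        simp [lastW, hk]
      | read k' => rfl
    simp only [List.foldl_cons, hop]
    exact ih o fun op' hop' => h op' (List.mem_cons_of_mem _ hop')

lemma last_write_eval (k : K) (T : List (Op K V)) (n i : ℕ) (hn : n ≤ T.length)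
    (hi : i < n) (val : V)
    (hval : T[i]'(lt_of_lt_of_le hi hn) = Op.write k val)
    (hno : ∀ (j : ℕ) (hj : j < n), i < j → ∀ v',
      T[j]'(lt_of_lt_of_le hj hn) ≠ Op.write k v') :
    (T.take n).foldl (lastW k) none = some val := by
  set P := T.take n with hP
  have hPlen : P.length = n := by simp [hP, List.length_take, min_eq_left hn]
  have hiP : i < P.length := hPlen ▸ hi
  have hdecomp : P = P.take i ++ P[i] :: P.drop (i + 1) := by
    conv_lhs => rw [← List.take_append_drop i P]
    rw [List.drop_eq_getElem_cons hiP]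
  rw [hdecomp, List.foldl_append, List.foldl_cons]
  have hPi : P[i] = Op.write k val := by
    simp only [hP, List.getElem_take]
    exact hval
  rw [hPi]
  have hw : lastW k ((P.take i).foldl (lastW k) none) (Op.write k val) = some val := by
    simp [lastW]
  rw [hw]
  apply foldl_lastW_no_write
  intro op hop v' hcon
  obtain ⟨m', hm', hop'⟩ := List.mem_iff_getElem.mp hop
  have hm'' : i + 1 + m' < n := by
    have := hm'
    rw [List.length_drop, hPlen] at this
    omega
  have : (P.drop (i + 1))[m'] = T[i + 1 + m']'(lt_of_lt_of_le hm'' hn) := by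
    simp only [hP, List.getElem_drop, List.getElem_take]
  rw [this] at hop'
  exact hno (i + 1 + m') hm'' (by omega) v' (hop' ▸ hcon)

/-- Theorems 8.3 + 8.4: let `G` be a finite DAG with edge relation `E`, node
labels `lab` (operations), and reads-from designation `rf`.  If `G` is valid —
every read node `v` of key `k` reads from a write node `rf v` on `k` with a
path from `rf v` to `v`, and every other write node `w` on `k` has a path to
`rf v` or a path from `v`; and the write nodes of each key are totally ordered
by reachability — then any two topological orders of `G` (enumerations `e₁`,
`e₂` in which sources of edges come first) yield, from any initial store, the
same value at every read node and the same final store. -/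
theorem topological_orders_agree {N : Type*} [Fintype N] [DecidableEq N]
    (E : N → N → Prop) (hacyc : ∀ x : N, ¬ Relation.TransGen E x x)
    (lab : N → Op K V) (rf : N → N)
    (hvalid : ∀ (v : N) (k : K), lab v = Op.read k →
      (∃ val, lab (rf v) = Op.write k val) ∧ Relation.TransGen E (rf v) v ∧
      ∀ w : N, w ≠ rf v → w ≠ v → (∃ val, lab w = Op.write k val) →
        Relation.TransGen E w (rf v) ∨ Relation.TransGen E v w)
    (hwriters : ∀ (k : K) (w₁ w₂ : N),
      (∃ val, lab w₁ = Op.write k val) → (∃ val, lab w₂ = Op.write k val) →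
      w₁ = w₂ ∨ Relation.TransGen E w₁ w₂ ∨ Relation.TransGen E w₂ w₁)
    (e₁ e₂ : Fin (Fintype.card N) ≃ N)
    (he₁ : ∀ u v : N, E u v → e₁.symm u < e₁.symm v)
    (he₂ : ∀ u v : N, E u v → e₂.symm u < e₂.symm v)
    (s₀ : K → V) :
    (∀ (v : N) (k : K), lab v = Op.read k →
      execStore s₀ ((List.ofFn (lab ∘ e₁)).take ((e₁.symm v : Fin (Fintype.card N)) : ℕ)) k =
        execStore s₀ ((List.ofFn (lab ∘ e₂)).take ((e₂.symm v : Fin (Fintype.card N)) : ℕ)) k) ∧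
    execStore s₀ (List.ofFn (lab ∘ e₁)) = execStore s₀ (List.ofFn (lab ∘ e₂)) := by
  classical
  -- paths respect topological orders
  have hpos : ∀ (e : Fin (Fintype.card N) ≃ N), (∀ a b : N, E a b → e.symm a < e.symm b) →
      ∀ a b : N, Relation.TransGen E a b → e.symm a < e.symm b := by
    intro e he a b h
    induction h with
    | single h' => exact he _ _ h'
    | tail _ h' ih => exact lt_trans ih (he _ _ h')
  -- getElem of the schedule
  have hlen : ∀ (e : Fin (Fintype.card N) ≃ N), (List.ofFn (lab ∘ e)).length = Fintype.card N := by
    intro e; simp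
  have hget : ∀ (e : Fin (Fintype.card N) ≃ N) (j : ℕ) (hj : j < Fintype.card N),
      (List.ofFn (lab ∘ e))[j]'(by rw [hlen]; exact hj) = lab (e ⟨j, hj⟩) := by
    intro e j hj
    rw [List.getElem_ofFn]
    rfl
  constructor
  · -- read part
    intro v k hv
    obtain ⟨⟨val, hu⟩, hpath, hother⟩ := hvalid v k hv
    have key : ∀ (e : Fin (Fintype.card N) ≃ N), (∀ a b : N, E a b → e.symm a < e.symm b) →
        execStore s₀ ((List.ofFn (lab ∘ e)).take ((e.symm v : Fin (Fintype.card N)) : ℕ)) k = val := by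
      intro e he
      rw [execStore_eq]
      have hnle : ((e.symm v : Fin (Fintype.card N)) : ℕ) ≤ (List.ofFn (lab ∘ e)).length := by
        rw [hlen]; exact le_of_lt (e.symm v).isLt
      have hilt : ((e.symm (rf v) : Fin (Fintype.card N)) : ℕ) < ((e.symm v : Fin (Fintype.card N)) : ℕ) :=
        hpos e he _ _ hpath
      rw [last_write_eval k _ _ ((e.symm (rf v) : Fin (Fintype.card N)) : ℕ) hnle hilt val ?_ ?_]
      · rfl
      · rw [hget e _ (e.symm (rf v)).isLt]
        simp [hu]
      · intro j hj hij v' hcon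
        have hjm : j < Fintype.card N := lt_trans hj (e.symm v).isLt
        rw [hget e j hjm] at hcon
        set w := e ⟨j, hjm⟩ with hw
        have hwpos : e.symm w = ⟨j, hjm⟩ := Equiv.symm_apply_apply e _
        have hwu : w ≠ rf v := by
          intro h; rw [h] at hwpos
          have : ((e.symm (rf v) : Fin (Fintype.card N)) : ℕ) = j := by rw [hwpos]
          omega
        have hwv : w ≠ v := by
          intro h; rw [h] at hwpos
          have : ((e.symm v : Fin (Fintype.card N)) : ℕ) = j := by rw [hwpos]
          omega
        rcases hother w hwu hwv ⟨v', hcon⟩ with h | h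
        · have := hpos e he _ _ h
          rw [hwpos] at this
          have : j < ((e.symm (rf v) : Fin (Fintype.card N)) : ℕ) := this
          omega
        · have := hpos e he _ _ h
          rw [hwpos] at this
          have : ((e.symm v : Fin (Fintype.card N)) : ℕ) < j := this
          omega
    rw [key e₁ he₁, key e₂ he₂]
  · -- final store part
    funext k
    rw [execStore_eq, execStore_eq]
    by_cases hW : ∃ w : N, ∃ val, lab w = Op.write k val
    · obtain ⟨w₀, hw₀⟩ := hW
      -- the maximal writer in the e₁-order
      set W : Finset N := Finset.univ.filter (fun w => ∃ val, lab w = Op.write k val) with hWdef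
      have hWne : W.Nonempty := ⟨w₀, by simp [hWdef, hw₀]⟩
      obtain ⟨wm, hwmW, hwmmax⟩ := Finset.exists_max_image W (fun w => e₁.symm w) hWne
      obtain ⟨val, hwm⟩ : ∃ val, lab wm = Op.write k val := by
        simpa [hWdef] using hwmW
      have hmax_all : ∀ w : N, (∃ v', lab w = Op.write k v') → w ≠ wm →
          Relation.TransGen E w wm := by
        intro w hw hne
        rcases hwriters k w wm hw ⟨val, hwm⟩ with h | h | h
        · exact absurd h hne
        · exact h
        · exfalso
          have h1 : e₁.symm wm < e₁.symm w := hpos e₁ he₁ _ _ h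
          have h2 : e₁.symm w ≤ e₁.symm wm := hwmmax w (by simp [hWdef, hw])
          exact absurd h1 (not_lt.mpr h2)
      have key2 : ∀ (e : Fin (Fintype.card N) ≃ N), (∀ a b : N, E a b → e.symm a < e.symm b) →
          (List.ofFn (lab ∘ e)).foldl (lastW k) none = some val := by
        intro e he
        have hfull : List.ofFn (lab ∘ e) = (List.ofFn (lab ∘ e)).take (Fintype.card N) := by
          rw [List.take_of_length_le (le_of_eq (hlen e))]
        rw [hfull]
        apply last_write_eval k _ (Fintype.card N) ((e.symm wm : Fin (Fintype.card N)) : ℕ) (le_of_eq (hlen e).symm)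
          (e.symm wm).isLt val
        · rw [hget e _ (e.symm wm).isLt]
          simp [hwm]
        · intro j hj hij v' hcon
          rw [hget e j hj] at hcon
          set w := e ⟨j, hj⟩ with hw
          have hwpos : e.symm w = ⟨j, hj⟩ := Equiv.symm_apply_apply e _
          have hne : w ≠ wm := by
            intro h; rw [h] at hwpos
            have : ((e.symm wm : Fin (Fintype.card N)) : ℕ) = j := by rw [hwpos]
            omega
          have := hpos e he _ _ (hmax_all w ⟨v', hcon⟩ hne)
          rw [hwpos] at this
          have : j < ((e.symm wm : Fin (Fintype.card N)) : ℕ) := this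
          omega
      rw [key2 e₁ he₁, key2 e₂ he₂]
    · push_neg at hW
      have hnone : ∀ (e : Fin (Fintype.card N) ≃ N),
          (List.ofFn (lab ∘ e)).foldl (lastW k) none = none := by
        intro e
        apply foldl_lastW_no_write
        intro op hop v' hcon
        obtain ⟨i, hop'⟩ := List.mem_ofFn.mp hop
        exact hW (e i) v' (by rw [← hop'] at hcon; exact hcon)
      rw [hnone e₁, hnone e₂]
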